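/- Let I ⊆ ℝ be an open interval, V : ℝ → ℝ continuous on I, ε ∈ ℝ, and γ : ℝ → ℝ twice differentiable and never vanishing on I. Let φ_w : ℝ → ℝ be twice differentiable on I with -φ_w''(x) + (V(x) - ε)·φ_w(x) = 0 on I, and let φ_v : ℝ → ℝ be twice differentiable and never vanishing on I with -φ_v''(x) + (V(x) + 1/γ(x)^2 - ε)·φ_v(x) = 0 on I. Set v = φ_v'/φ_v and define φ̄(x) = γ(x)·(-φ_w'(x) + v(x)·φ_w(x)). Then φ̄ is twice differentiable on I and satisfies -φ̄''(x) + (V(x) - 2·((γ'(x)/γ(x))·v(x) + v'(x)) + γ''(x)/γ(x) - ε)·φ̄(x) = 0 for all x ∈ I. -/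

import Mathlib

set_option maxHeartbeats 2000000 in
/-- **Theorem 3 of the paper (second-order counterpart of the generalized
finite-difference transformation).** If `φ_w` solves the Schrödinger-type
equation `-φ'' + (V - ε)φ = 0` on the open interval `I`, `γ` is twice
differentiable and never vanishing on `I`, and `φ_v` is a never vanishing
solution of `-φ'' + (V + 1/γ² - ε)φ = 0` on `I`, then with `v = φ_v'/φ_v`,
the function `φ̄ = γ(-φ_w' + v φ_w)` is twice differentiable on `I` and
satisfies `-φ̄'' + (V - 2((γ'/γ)v + v') + γ''/γ - ε)φ̄ = 0` on `I`. -/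
theorem schrodinger_generalized_finite_difference
    (I : Set ℝ) (hI : IsOpen I) (hIint : I.OrdConnected)
    (V : ℝ → ℝ) (hV : ContinuousOn V I) (ε : ℝ)
    (γ γ' γ'' : ℝ → ℝ)
    (hγ : ∀ x ∈ I, HasDerivAt γ (γ' x) x)
    (hγ' : ∀ x ∈ I, HasDerivAt γ' (γ'' x) x)
    (hγ0 : ∀ x ∈ I, γ x ≠ 0)
    (φw φw' φw'' : ℝ → ℝ)
    (hφw : ∀ x ∈ I, HasDerivAt φw (φw' x) x)
    (hφw' : ∀ x ∈ I, HasDerivAt φw' (φw'' x) x)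
    (hSw : ∀ x ∈ I, -φw'' x + (V x - ε) * φw x = 0)
    (φv φv' φv'' : ℝ → ℝ)
    (hφv : ∀ x ∈ I, HasDerivAt φv (φv' x) x)
    (hφv' : ∀ x ∈ I, HasDerivAt φv' (φv'' x) x)
    (hφv0 : ∀ x ∈ I, φv x ≠ 0)
    (hSv : ∀ x ∈ I, -φv'' x + (V x + 1 / (γ x) ^ 2 - ε) * φv x = 0) :
    (∀ x ∈ I,
      DifferentiableAt ℝ (fun y => γ y * (-φw' y + (φv' y / φv y) * φw y)) x) ∧
    (∀ x ∈ I,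
      DifferentiableAt ℝ
        (deriv (fun y => γ y * (-φw' y + (φv' y / φv y) * φw y))) x) ∧
    (∀ x ∈ I,
      -(deriv (deriv (fun y => γ y * (-φw' y + (φv' y / φv y) * φw y))) x)
        + (V x
            - 2 * ((γ' x / γ x) * (φv' x / φv x)
                    + deriv (fun y => φv' y / φv y) x)
            + γ'' x / γ x - ε)
          * (γ x * (-φw' x + (φv' x / φv x) * φw x)) = 0) := by
  classical
  -- pointwise derivative of v = φv'/φv
  have hvD : ∀ x ∈ I, HasDerivAt (fun y => φv' y / φv y)
      ((φv'' x * φv x - φv' x * φv' x) / (φv x) ^ 2) x := fun x hx =>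
    (hφv' x hx).div (hφv x hx) (hφv0 x hx)
  set vd : ℝ → ℝ := fun x => (φv'' x * φv x - φv' x * φv' x) / (φv x) ^ 2 with hvddef
  set v : ℝ → ℝ := fun y => φv' y / φv y with hvdef
  set w : ℝ → ℝ := fun y => -φw' y + v y * φw y with hwdef
  set φb : ℝ → ℝ := fun y => γ y * w y with hφbdef
  set w1 : ℝ → ℝ := fun y => (1 / γ y ^ 2 - v y ^ 2) * φw y + v y * φw' y with hw1def
  have hwD : ∀ x ∈ I, HasDerivAt w (w1 x) x := by
    intro x hx
    have h : HasDerivAt w (-φw'' x + (vd x * φw x + v x * φw' x)) x :=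
      ((hφw' x hx).neg).add ((hvD x hx).mul (hφw x hx))
    have e1 : φw'' x = (V x - ε) * φw x := by linarith [hSw x hx]
    have e2 : φv'' x = (V x + 1 / γ x ^ 2 - ε) * φv x := by linarith [hSv x hx]
    convert h using 1
    simp only [hw1def, hvddef, hvdef]
    rw [e1, e2]
    have hg := hγ0 x hx
    have hv := hφv0 x hx
    field_simp
    ring
  set F : ℝ → ℝ := fun x => γ' x * w x + γ x * w1 x with hFdef
  have hφbD : ∀ x ∈ I, HasDerivAt φb (F x) x := fun x hx =>
    (hγ x hx).mul (hwD x hx)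
  -- derivative of w1
  set w2 : ℝ → ℝ := fun x =>
    (-(2 * γ x * γ' x) / (γ x ^ 2) ^ 2 - 2 * v x ^ 1 * vd x) * φw x
      + (1 / γ x ^ 2 - v x ^ 2) * φw' x + (vd x * φw' x + v x * φw'' x) with hw2def
  have hw1D : ∀ x ∈ I, HasDerivAt w1 (w2 x) x := by
    intro x hx
    have hvd := hvD x hx
    have hγsq : HasDerivAt (fun y => γ y ^ 2) (2 * γ x ^ 1 * γ' x) x := (hγ x hx).pow 2
    have hinv : HasDerivAt (fun y => 1 / γ y ^ 2)
        (-(2 * γ x * γ' x) / (γ x ^ 2) ^ 2) x := by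
      have := hγsq.inv (pow_ne_zero 2 (hγ0 x hx))
      have this : HasDerivAt (fun y => (γ y ^ 2)⁻¹) (-(2 * γ x ^ 1 * γ' x) / (γ x ^ 2) ^ 2) x := this
      simpa [one_div, pow_one, mul_comm, mul_assoc, mul_left_comm] using this
    have hvsq : HasDerivAt (fun y => v y ^ 2) (2 * v x ^ 1 * vd x) x := hvd.pow 2
    exact ((hinv.sub hvsq).mul (hφw x hx)).add ((hvd.mul (hφw' x hx)))
  set G : ℝ → ℝ := fun x =>
    (γ'' x * w x + γ' x * w1 x) + (γ' x * w1 x + γ x * w2 x) with hGdef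
  have hFD : ∀ x ∈ I, HasDerivAt F (G x) x := fun x hx =>
    ((hγ' x hx).mul (hwD x hx)).add ((hγ x hx).mul (hw1D x hx))
  have hderiv1 : ∀ x ∈ I, deriv φb x = F x := fun x hx => (hφbD x hx).deriv
  have hEq : ∀ x ∈ I, deriv φb =ᶠ[nhds x] F := fun x hx =>
    Filter.eventuallyEq_of_mem (hI.mem_nhds hx) hderiv1
  have hderiv2 : ∀ x ∈ I, deriv (deriv φb) x = G x := by
    intro x hx
    rw [Filter.EventuallyEq.deriv_eq (hEq x hx)]
    exact (hFD x hx).deriv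
  refine ⟨fun x hx => (hφbD x hx).differentiableAt, fun x hx => ?_, fun x hx => ?_⟩
  · have : DifferentiableAt ℝ F x := (hFD x hx).differentiableAt
    exact this.congr_of_eventuallyEq (hEq x hx)
  · rw [hderiv2 x hx, (hvD x hx).deriv]
    have e1 : φw'' x = (V x - ε) * φw x := by linarith [hSw x hx]
    have e2 : φv'' x = (V x + 1 / γ x ^ 2 - ε) * φv x := by linarith [hSv x hx]
    simp only [hGdef, hw2def, hw1def, hwdef, hvdef, hvddef]
    rw [e1, e2]
    have hg := hγ0 x hx
    have hv := hφv0 x hx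
    field_simp
    ring
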